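/- A pairwise (butterfly) summation over P = 2^n processors computes the full sum ∑_{l=0}^{P−1} x_l on every processor in exactly n = log₂ P rounds: if s⁰_l = x_l and s^{j+1}_l = s^j_l + s^j_{l XOR 2^j}, then s^n_l = ∑_{m=0}^{P−1} x_m for every l. -/

import Mathlib

lemma two_pow_xor_of_lt {j i : ℕ} (h : i < 2 ^ j) : 2 ^ j ^^^ i = 2 ^ j + i := by
  apply Nat.eq_of_testBit_eq
  intro k
  rw [Nat.testBit_xor, Nat.testBit_two_pow]
  rcases lt_trichotomy k j with hk | rfl | hk
  · rw [Nat.testBit_two_pow_add_gt hk]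
    simp [Nat.ne_of_gt hk]
  · rw [Nat.testBit_two_pow_add_eq, Nat.testBit_lt_two_pow h]
    simp
  · have h2 : 2 ^ j + i < 2 ^ k := by
      calc 2 ^ j + i < 2 ^ (j + 1) := by omega
      _ ≤ 2 ^ k := Nat.pow_le_pow_right (by norm_num) hk
    rw [Nat.testBit_lt_two_pow h2,
      Nat.testBit_lt_two_pow (lt_trans h (Nat.pow_lt_pow_right (by norm_num) hk))]
    simp [Nat.ne_of_lt hk]

/-- Butterfly summation over P = 2ⁿ processors: with s⁰_l = x_l and
s^{j+1}_l = s^j_l + s^j_{l XOR 2^j}, every processor l < 2ⁿ holds the full sum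
after n rounds. -/
theorem stmt_14 {M : Type*} [AddCommMonoid M] (n : ℕ) (x : ℕ → M)
    (s : ℕ → ℕ → M)
    (h0 : ∀ l, s 0 l = x l)
    (hstep : ∀ j l, s (j + 1) l = s j l + s j (l ^^^ 2 ^ j)) :
    ∀ l < 2 ^ n, s n l = ∑ m ∈ Finset.range (2 ^ n), x m := by
  have key : ∀ j l, s j l = ∑ m ∈ Finset.range (2 ^ j), x (l ^^^ m) := by
    intro j
    induction j with
    | zero => intro l; simp [h0]
    | succ j ih =>
      intro l
      rw [hstep, ih, ih, pow_succ, mul_two, Finset.sum_range_add]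
      congr 1
      apply Finset.sum_congr rfl
      intro m hm
      rw [Finset.mem_range] at hm
      rw [← two_pow_xor_of_lt hm, ← Nat.xor_assoc]
  intro l hl
  rw [key]
  apply Finset.sum_nbij' (fun m => l ^^^ m) (fun m => l ^^^ m)
  · intro m hm
    rw [Finset.mem_range] at *
    exact Nat.xor_lt_two_pow hl hm
  · intro m hm
    rw [Finset.mem_range] at *
    exact Nat.xor_lt_two_pow hl hm
  · intro m _; exact Nat.xor_xor_cancel_left _ _
  · intro m _; exact Nat.xor_xor_cancel_left _ _
  · intro m _; rfl
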